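/- Let L be an irreducible linear order of finite Hausdorff rank r with 1 ≤ r, and suppose L ≅ ω ×ₗ L' (resp. ω* ×ₗ L'). Then the (r−1)-th Hausdorff derivative L^(r−1) is order-isomorphic to ω (resp. ω*). -/

import Mathlib

section HausdorffDerivative

variable {M : Type} [LinearOrder M]

/-- `x ∼₁ y` iff the closed interval between `x` and `y` is finite. -/
def sim1 (x y : M) : Prop := (Set.uIcc x y).Finite

theorem sim1_refl (x : M) : sim1 x x := by simp [sim1]

theorem sim1_symm {x y : M} (h : sim1 x y) : sim1 y x := by
  rwa [sim1, Set.uIcc_comm]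

theorem sim1_trans {x y z : M} (h1 : sim1 x y) (h2 : sim1 y z) : sim1 x z :=
  Set.Finite.subset (h1.union h2) (Set.uIcc_subset_uIcc_union_uIcc)

/-- The setoid of `∼₁`-equivalence. -/
def sim1Setoid (M : Type) [LinearOrder M] : Setoid M :=
  ⟨sim1, ⟨sim1_refl, sim1_symm, sim1_trans⟩⟩

/-- The first Hausdorff derivative `M^(1)`: the linear order of `∼₁`-classes. -/
def HDeriv (M : Type) [LinearOrder M] : Type := Quotient (sim1Setoid M)

theorem sim1_le_congr {x x' y y' : M} (hx : sim1 x x') (hy : sim1 y y')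
    (h : x ≤ y ∨ sim1 x y) : x' ≤ y' ∨ sim1 x' y' := by
  by_cases hxy' : sim1 x' y'
  · exact Or.inr hxy'
  rcases h with h | h
  · left
    by_contra hlt
    push_neg at hlt
    apply hxy' (sim1_symm _)
    have hsub : Set.uIcc y' x' ⊆ Set.uIcc y' y ∪ Set.uIcc x x' := by
      intro z hz
      rw [Set.uIcc_of_le hlt.le, Set.mem_Icc] at hz
      rcases le_or_gt z y with hzy | hzy
      · exact Or.inl (Set.mem_uIcc.2 (Or.inl ⟨hz.1, hzy⟩))
      · exact Or.inr (Set.mem_uIcc.2 (Or.inl ⟨(h.trans hzy.le), hz.2⟩))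
    exact Set.Finite.subset ((sim1_symm hy).union hx) hsub
  · exact absurd (sim1_trans (sim1_trans (sim1_symm hx) h) hy) hxy'

/-- The induced order on `∼₁`-classes. -/
def HDeriv.le : HDeriv M → HDeriv M → Prop :=
  Quotient.lift₂ (fun x y => x ≤ y ∨ sim1 x y)
    (fun _ _ _ _ ha hb => propext
      ⟨sim1_le_congr ha hb, sim1_le_congr (sim1_symm ha) (sim1_symm hb)⟩)

noncomputable instance HDeriv.instLinearOrder : LinearOrder (HDeriv M) where
  le := HDeriv.le
  le_refl := by rintro ⟨x⟩; exact Or.inl le_rfl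
  le_trans := by
    rintro ⟨x⟩ ⟨y⟩ ⟨z⟩ (h1 | h1) (h2 | h2)
    · exact Or.inl (h1.trans h2)
    · rcases le_or_gt x z with h | h
      · exact Or.inl h
      · exact Or.inr (sim1_symm (Set.Finite.subset h2
          (by rw [Set.uIcc_of_le h.le, Set.uIcc_of_ge (h.le.trans h1)]
              exact Set.Icc_subset_Icc le_rfl h1)))
    · rcases le_or_gt x z with h | h
      · exact Or.inl h
      · exact Or.inr (Set.Finite.subset h1
          (by rw [Set.uIcc_of_ge h.le, Set.uIcc_of_ge (h2.trans h.le)]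
              exact Set.Icc_subset_Icc h2 le_rfl))
    · exact Or.inr (sim1_trans h1 h2)
  le_antisymm := by
    rintro ⟨x⟩ ⟨y⟩ (h1 | h1) (h2 | h2)
    · exact Quotient.sound (le_antisymm h1 h2 ▸ sim1_refl x)
    · exact Quotient.sound (sim1_symm h2)
    · exact Quotient.sound h1
    · exact Quotient.sound h1
  le_total := by
    rintro ⟨x⟩ ⟨y⟩
    rcases le_total x y with h | h
    · exact Or.inl (Or.inl h)
    · exact Or.inr (Or.inl h)
  toDecidableLE := Classical.decRel _

end HausdorffDerivative
section IterDeriv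

/-- Auxiliary: the `n`-th iterated Hausdorff derivative together with its order. -/
noncomputable def IterDerivAux (M : Type) (i : LinearOrder M) : ℕ → (T : Type) × LinearOrder T
  | 0 => ⟨M, i⟩
  | n + 1 => ⟨@HDeriv (IterDerivAux M i n).1 (IterDerivAux M i n).2,
      @HDeriv.instLinearOrder (IterDerivAux M i n).1 (IterDerivAux M i n).2⟩

/-- The `n`-th iterated Hausdorff derivative `M^(n)`. -/
noncomputable def IterDeriv (M : Type) [i : LinearOrder M] (n : ℕ) : Type :=
  (IterDerivAux M i n).1

noncomputable instance (M : Type) [i : LinearOrder M] (n : ℕ) : LinearOrder (IterDeriv M n) :=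
  (IterDerivAux M i n).2

/-- The (finite) Hausdorff rank: the least `n` such that `M^(n)` is finite. -/
noncomputable def hrank (M : Type) [LinearOrder M] : ℕ :=
  sInf {n : ℕ | Finite (IterDeriv M n)}

end IterDeriv

section OmegaShiftDev

variable {M : Type} [LinearOrder M]

def hmk (x : M) : HDeriv M := Quotient.mk (sim1Setoid M) x

theorem hmk_surj : Function.Surjective (hmk (M := M)) := fun q => Quotient.exists_rep q

theorem hd_le_iff {x y : M} : hmk x ≤ hmk y ↔ x ≤ y ∨ sim1 x y := Iff.rfl

theorem hd_eq_iff {x y : M} : hmk x = hmk y ↔ sim1 x y :=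
  ⟨Quotient.exact, Quotient.sound (s := sim1Setoid M)⟩

/-- The data witnessing that `M` looks like an `ω`-indexed sum: a self-embedding `f`
with upward-closed range, `x ≤ f x`, cofinal iterates, and vanishing iterated range. -/
structure OmegaShift (M : Type) [LinearOrder M] : Type where
  f : M → M
  emb : ∀ ⦃x y : M⦄, f x ≤ f y ↔ x ≤ y
  up : ∀ ⦃x z : M⦄, f x ≤ z → ∃ w, f w = z
  le_f : ∀ x : M, x ≤ f x
  cofinal : ∀ x y : M, ∃ n : ℕ, y ≤ f^[n] x
  vanish : ∀ y : M, ∃ n : ℕ, ∀ x : M, f^[n] x ≠ y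

namespace OmegaShift

theorem inj (S : OmegaShift M) : Function.Injective S.f := fun a b h =>
  le_antisymm (S.emb.mp h.le) (S.emb.mp h.ge)

theorem iterate_le (S : OmegaShift M) (n : ℕ) (x : M) : x ≤ S.f^[n] x := by
  induction n with
  | zero => exact le_rfl
  | succ n ih => rw [Function.iterate_succ_apply']; exact ih.trans (S.le_f _)

theorem iterate_up (S : OmegaShift M) (n : ℕ) : ∀ ⦃x z : M⦄, S.f^[n] x ≤ z → ∃ w, S.f^[n] w = z := by
  induction n with
  | zero => exact fun x z _ => ⟨z, rfl⟩
  | succ n ih =>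
    intro x z h
    rw [Function.iterate_succ_apply'] at h
    obtain ⟨w, rfl⟩ := S.up h
    have : S.f^[n] x ≤ w := S.emb.mp h
    obtain ⟨v, rfl⟩ := ih this
    exact ⟨v, by rw [Function.iterate_succ_apply']⟩

theorem icc_image (S : OmegaShift M) {a b : M} (hab : a ≤ b) :
    Set.Icc (S.f a) (S.f b) = S.f '' Set.Icc a b := by
  apply Set.Subset.antisymm
  · rintro z ⟨h1, h2⟩
    obtain ⟨w, rfl⟩ := S.up h1
    exact ⟨w, ⟨S.emb.mp h1, S.emb.mp h2⟩, rfl⟩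
  · rintro z ⟨w, ⟨h1, h2⟩, rfl⟩
    exact ⟨S.emb.mpr h1, S.emb.mpr h2⟩

theorem sim_iff (S : OmegaShift M) {a b : M} : sim1 (S.f a) (S.f b) ↔ sim1 a b := by
  rcases le_total a b with hab | hab
  · rw [sim1, sim1, Set.uIcc_of_le hab, Set.uIcc_of_le (S.emb.mpr hab), S.icc_image hab]
    exact ⟨fun h => h.of_finite_image (S.inj.injOn), fun h => h.image _⟩
  · rw [sim1, sim1, Set.uIcc_of_ge hab, Set.uIcc_of_ge (S.emb.mpr hab), S.icc_image hab]
    exact ⟨fun h => h.of_finite_image (S.inj.injOn), fun h => h.image _⟩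

theorem collapse (S : OmegaShift M) (y : M) (hcof : ∀ x : M, ∃ c, sim1 c y ∧ x ≤ c) : ∀ x : M, sim1 x y := by
  have hiter : ∀ m : ℕ, sim1 (S.f^[m] y) y := by
    intro m
    obtain ⟨c, hc, hyc⟩ := hcof (S.f^[m] y)
    have h1 : y ≤ S.f^[m] y := S.iterate_le m y
    refine sim1_symm (Set.Finite.subset (sim1_symm hc) ?_)
    rw [Set.uIcc_of_le (h1.trans hyc), Set.uIcc_of_le h1]
    exact Set.Icc_subset_Icc le_rfl hyc
  have hstep : ∀ c : M, sim1 c y → sim1 (S.f c) y := by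
    intro c hc
    obtain ⟨m, hm⟩ := S.cofinal y (S.f c)
    have h1 : c ≤ S.f c := S.le_f c
    have h2 : sim1 c (S.f^[m] y) := sim1_trans hc (sim1_symm (hiter m))
    have h3 : sim1 c (S.f c) := by
      refine Set.Finite.subset h2 ?_
      rw [Set.uIcc_of_le (h1.trans hm), Set.uIcc_of_le h1]
      exact Set.Icc_subset_Icc le_rfl hm
    exact sim1_trans (sim1_symm h3) hc
  have hreach : ∀ x : M, ∃ k : ℕ, sim1 (S.f^[k] x) y := by
    intro x
    obtain ⟨k, hk⟩ := S.cofinal x (S.f y)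
    obtain ⟨m, hm⟩ := S.cofinal y (S.f^[k] x)
    have hfy : sim1 (S.f y) y := hstep y (sim1_refl y)
    have h2 : sim1 (S.f y) (S.f^[m] y) := sim1_trans hfy (sim1_symm (hiter m))
    refine ⟨k, sim1_trans (sim1_symm ?_) hfy⟩
    refine Set.Finite.subset h2 ?_
    rw [Set.uIcc_of_le (hk.trans hm), Set.uIcc_of_le hk]
    exact Set.Icc_subset_Icc le_rfl hm
  have hdown : ∀ k : ℕ, ∀ x : M, sim1 (S.f^[k] x) y → sim1 x y := by
    intro k
    induction k with
    | zero => exact fun x h => h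
    | succ k ih =>
      intro x h
      rw [Function.iterate_succ_apply] at h
      have h1 : sim1 (S.f x) y := ih (S.f x) h
      have h2 : sim1 (S.f (S.f x)) y := hstep _ h1
      have h3 : sim1 (S.f x) (S.f (S.f x)) := sim1_trans h1 (sim1_symm h2)
      exact sim1_trans (S.sim_iff.mp h3) h1
  intro x
  obtain ⟨k, hk⟩ := hreach x
  exact hdown k x hk

/-- Transport an `OmegaShift` along an order isomorphism. -/
noncomputable def ofIso {N : Type} [LinearOrder N] (e : M ≃o N) (S : OmegaShift M) :
    OmegaShift N where
  f := fun x => e (S.f (e.symm x))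
  emb := by intro x y; simp [S.emb]
  up := by
    intro x z h
    have h' : S.f (e.symm x) ≤ e.symm z := by
      rw [← e.le_iff_le]; simpa using h
    obtain ⟨w, hw⟩ := S.up h'
    exact ⟨e w, by simp [hw]⟩
  le_f := fun x => by
    have := S.le_f (e.symm x)
    calc x = e (e.symm x) := by simp
    _ ≤ e (S.f (e.symm x)) := e.le_iff_le.mpr this
  cofinal := by
    have hit : ∀ n (x : N), (fun x => e (S.f (e.symm x)))^[n] x = e (S.f^[n] (e.symm x)) := by
      intro n
      induction n with
      | zero => intro x; simp
      | succ n ih =>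
        intro x
        rw [Function.iterate_succ_apply', ih, Function.iterate_succ_apply']
        simp
    intro x y
    obtain ⟨n, hn⟩ := S.cofinal (e.symm x) (e.symm y)
    refine ⟨n, ?_⟩
    rw [hit]
    calc y = e (e.symm y) := by simp
    _ ≤ e (S.f^[n] (e.symm x)) := e.le_iff_le.mpr hn
  vanish := by
    have hit : ∀ n (x : N), (fun x => e (S.f (e.symm x)))^[n] x = e (S.f^[n] (e.symm x)) := by
      intro n
      induction n with
      | zero => intro x; simp
      | succ n ih =>
        intro x
        rw [Function.iterate_succ_apply', ih, Function.iterate_succ_apply']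
        simp
    intro y
    obtain ⟨n, hn⟩ := S.vanish (e.symm y)
    refine ⟨n, fun x hx => hn (e.symm x) ?_⟩
    rw [hit] at hx
    have := congrArg e.symm hx
    simpa using this

end OmegaShift

end OmegaShiftDev
section OmegaShiftDev2

variable {M : Type} [LinearOrder M]

namespace OmegaShift

theorem lex_le_def {A B : Type} [LinearOrder A] [LinearOrder B] (x y : A ×ₗ B) :
    x ≤ y ↔ (ofLex x).1 < (ofLex y).1 ∨ ((ofLex x).1 = (ofLex y).1 ∧ (ofLex x).2 ≤ (ofLex y).2) :=
  Prod.Lex.le_iff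

/-- The basic example: `ℕ ×ₗ K` carries an `OmegaShift`. -/
noncomputable def base (K : Type) [LinearOrder K] [Nonempty K] : OmegaShift (ℕ ×ₗ K) := by
  refine
    { f := fun x => toLex ((ofLex x).1 + 1, (ofLex x).2),
      emb := ?_, up := ?_, le_f := ?_, cofinal := ?_, vanish := ?_ }
  case refine_1 =>
    intro x y
    rw [lex_le_def, lex_le_def]
    constructor
    · rintro (h | ⟨h1, h2⟩)
      · exact Or.inl (by simpa using h)
      · exact Or.inr ⟨by simpa using h1, by simpa using h2⟩
    · rintro (h | ⟨h1, h2⟩)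
      · exact Or.inl (by simpa using h)
      · exact Or.inr ⟨by simpa using h1, by simpa using h2⟩
  case refine_2 =>
    intro x z h
    rw [lex_le_def] at h
    have h1 : 1 ≤ (ofLex z).1 := by
      rcases h with h | ⟨h1, _⟩
      · simp only [ofLex_toLex] at h; omega
      · simp only [ofLex_toLex] at h1; omega
    refine ⟨toLex ((ofLex z).1 - 1, (ofLex z).2), ?_⟩
    show toLex _ = z
    rw [show z = toLex (ofLex z) from rfl]
    congr 1
    simp only [ofLex_toLex]
    exact Prod.ext (by omega) rfl
  case refine_3 =>
    intro x
    rw [lex_le_def]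
    exact Or.inl (by simp)
  case refine_4 =>
    have hit : ∀ (n : ℕ) (x : ℕ ×ₗ K),
        (fun x => toLex ((ofLex x).1 + 1, (ofLex x).2))^[n] x = toLex ((ofLex x).1 + n, (ofLex x).2) := by
      intro n
      induction n with
      | zero => intro x; simp
      | succ n ih =>
        intro x
        rw [Function.iterate_succ_apply', ih]
        simp only [ofLex_toLex]
        congr 2 <;> omega
    intro x y
    refine ⟨(ofLex y).1 + 1, ?_⟩
    rw [hit, lex_le_def]
    exact Or.inl (by simp only [ofLex_toLex]; omega)
  case refine_5 =>
    have hit : ∀ (n : ℕ) (x : ℕ ×ₗ K),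
        (fun x => toLex ((ofLex x).1 + 1, (ofLex x).2))^[n] x = toLex ((ofLex x).1 + n, (ofLex x).2) := by
      intro n
      induction n with
      | zero => intro x; simp
      | succ n ih =>
        intro x
        rw [Function.iterate_succ_apply', ih]
        simp only [ofLex_toLex]
        congr 2 <;> omega
    intro y
    refine ⟨(ofLex y).1 + 1, fun x hx => ?_⟩
    rw [hit] at hx
    have := congrArg (fun z => (ofLex z).1) hx
    simp only [ofLex_toLex] at this
    omega

/-- The induced map on the Hausdorff derivative. -/
noncomputable def qmap (S : OmegaShift M) : HDeriv M → HDeriv M :=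
  Quotient.map S.f (fun _ _ h => S.sim_iff.mpr h)

theorem qmap_mk (S : OmegaShift M) (x : M) : S.qmap (hmk x) = hmk (S.f x) := rfl

theorem qmap_iterate (S : OmegaShift M) (n : ℕ) (x : M) :
    S.qmap^[n] (hmk x) = hmk (S.f^[n] x) := by
  induction n with
  | zero => rfl
  | succ n ih =>
    rw [Function.iterate_succ_apply', ih, Function.iterate_succ_apply']
    rfl

/-- An `OmegaShift` descends to the Hausdorff derivative when the latter is infinite. -/
noncomputable def step (S : OmegaShift M) (hQ : Infinite (HDeriv M)) :
    OmegaShift (HDeriv M) := by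
  refine { f := S.qmap, emb := ?_, up := ?_, le_f := ?_, cofinal := ?_, vanish := ?_ }
  case refine_1 =>
    intro q q'
    obtain ⟨x, rfl⟩ := hmk_surj q
    obtain ⟨y, rfl⟩ := hmk_surj q'
    rw [qmap_mk, qmap_mk, hd_le_iff, hd_le_iff]
    exact or_congr (S.emb (x := x) (y := y)) S.sim_iff
  case refine_2 =>
    intro q z h
    obtain ⟨x, rfl⟩ := hmk_surj q
    obtain ⟨z, rfl⟩ := hmk_surj z
    rw [qmap_mk, hd_le_iff] at h
    rcases h with h | h
    · obtain ⟨w, rfl⟩ := S.up h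
      exact ⟨hmk w, rfl⟩
    · exact ⟨hmk x, hd_eq_iff.mpr h⟩
  case refine_3 =>
    intro q
    obtain ⟨x, rfl⟩ := hmk_surj q
    exact Or.inl (S.le_f x)
  case refine_4 =>
    intro q q'
    obtain ⟨x, rfl⟩ := hmk_surj q
    obtain ⟨y, rfl⟩ := hmk_surj q'
    obtain ⟨n, hn⟩ := S.cofinal x y
    refine ⟨n, ?_⟩
    rw [qmap_iterate]
    exact Or.inl hn
  case refine_5 =>
    intro q
    obtain ⟨y, rfl⟩ := hmk_surj q
    have hnc : ∃ w : M, ∀ c, sim1 c y → ¬ w ≤ c := by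
      by_contra hcon
      push_neg at hcon
      have hall := S.collapse y (fun x => by
        obtain ⟨c, hc1, hc2⟩ := hcon x
        exact ⟨c, hc1, hc2⟩)
      have hsub : Subsingleton (HDeriv M) := ⟨by
        intro a b
        obtain ⟨u, rfl⟩ := hmk_surj a
        obtain ⟨v, rfl⟩ := hmk_surj b
        exact hd_eq_iff.mpr (sim1_trans (hall u) (sim1_symm (hall v)))⟩
      exact absurd hsub (not_subsingleton _)
    obtain ⟨w, hw⟩ := hnc
    obtain ⟨n, hn⟩ := S.vanish w
    refine ⟨n, fun q hq => ?_⟩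
    obtain ⟨x, rfl⟩ := hmk_surj q
    rw [qmap_iterate] at hq
    have hs : sim1 (S.f^[n] x) y := hd_eq_iff.mp hq
    have hle : S.f^[n] x ≤ w := (not_le.mp (hw _ hs)).le
    obtain ⟨v, hv⟩ := S.iterate_up n hle
    exact hn v hv

/-- Final step: an infinite order with finite derivative carrying an `OmegaShift`
is isomorphic to `ℕ`. -/
theorem toNat (S : OmegaShift M) (hM : Infinite M) (hQ : Finite (HDeriv M)) :
    Nonempty (M ≃o ℕ) := by
  haveI : Nonempty (HDeriv M) := ⟨hmk (Classical.arbitrary M)⟩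
  obtain ⟨q0, hq0⟩ := Finite.exists_max (id : HDeriv M → HDeriv M)
  obtain ⟨y, rfl⟩ := hmk_surj q0
  have hall : ∀ x : M, sim1 x y := by
    apply S.collapse
    intro x
    have hx : hmk x ≤ hmk y := hq0 (hmk x)
    rcases hd_le_iff.mp hx with h | h
    · exact ⟨y, sim1_refl y, h⟩
    · exact ⟨x, h, le_rfl⟩
  have hfin : ∀ a b : M, (Set.uIcc a b).Finite := fun a b =>
    sim1_trans (hall a) (sim1_symm (hall b))
  have hnomax : ∀ x : M, ∃ z, x < z := by
    intro x
    by_contra h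
    push_neg at h
    obtain ⟨n, hn⟩ := S.vanish x
    exact hn x (le_antisymm (h _) (S.iterate_le n x))
  have hmin : ∃ m : M, ∀ x, m ≤ x := by
    by_contra hno
    push_neg at hno
    have hpred : ∀ u : M, (Set.Iio u).Infinite := by
      intro u
      intro hf
      rcases Set.eq_empty_or_nonempty (Set.Iio u) with he | hne'
      · obtain ⟨x, hx⟩ := hno u
        exact absurd (he ▸ hx : x ∈ (∅ : Set M)) (Set.notMem_empty x)
      · obtain ⟨m, hm, hmle⟩ := Set.exists_min_image _ id hf hne'
        obtain ⟨x, hx⟩ := hno m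
        have hxm : x ∈ Set.Iio u := lt_trans hx hm
        exact absurd (hmle x hxm) (not_le.mpr hx)
    have hnsurj : ∃ u : M, ∀ w, S.f w ≠ u := by
      by_contra h
      push_neg at h
      have hsurjn : ∀ (n : ℕ) (u : M), ∃ w, S.f^[n] w = u := by
        intro n
        induction n with
        | zero => exact fun u => ⟨u, rfl⟩
        | succ n ih =>
          intro u
          obtain ⟨w, hw⟩ := h u
          obtain ⟨v, hv⟩ := ih w
          exact ⟨v, by rw [Function.iterate_succ_apply', hv, hw]⟩
      obtain ⟨n, hn⟩ := S.vanish y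
      obtain ⟨w, hw⟩ := hsurjn n y
      exact hn w hw
    obtain ⟨u, hu⟩ := hnsurj
    have himg : S.f '' Set.Iio u ⊆ Set.uIcc u (S.f u) := by
      rintro z ⟨w, hw, rfl⟩
      have h1 : S.f w ≤ S.f u := S.emb.mpr hw.le
      have h2 : u ≤ S.f w := by
        by_contra hh
        obtain ⟨v, hv⟩ := S.up (not_le.mp hh).le
        exact hu v hv
      rw [Set.uIcc_of_le (h2.trans h1)]
      exact ⟨h2, h1⟩
    have hinf2 : (S.f '' Set.Iio u).Infinite := (hpred u).image (S.inj.injOn)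
    exact hinf2 (Set.Finite.subset (hfin u (S.f u)) himg)
  obtain ⟨m0, hm0⟩ := hmin
  have hIioFin : ∀ x : M, (Set.Iio x).Finite := by
    intro x
    refine (hfin m0 x).subset ?_
    intro z hz
    rw [Set.uIcc_of_le (hm0 x)]
    exact ⟨hm0 z, hz.le⟩
  have hsm : StrictMono (fun x : M => (Set.Iio x).ncard) := by
    intro a b hab
    refine Set.ncard_lt_ncard ?_ (hIioFin b)
    constructor
    · exact fun z hz => lt_trans hz hab
    · intro hsub
      exact absurd (hsub hab) (lt_irrefl a)
  have hsurj : Function.Surjective (fun x : M => (Set.Iio x).ncard) := by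
    intro n
    induction n with
    | zero =>
      refine ⟨m0, ?_⟩
      have : Set.Iio m0 = (∅ : Set M) := by
        ext z
        simp only [Set.mem_Iio, Set.mem_empty_iff_false, iff_false, not_lt]
        exact hm0 z
      simp [this]
    | succ n ih =>
      obtain ⟨x, hx⟩ := ih
      obtain ⟨t, ht⟩ := hnomax x
      have hfoc : (Set.Ioc x t).Finite := by
        refine (hfin x t).subset ?_
        intro z hz
        rw [Set.uIcc_of_le ht.le]
        exact ⟨hz.1.le, hz.2⟩
      obtain ⟨m, hm, hmle⟩ := Set.exists_min_image _ id hfoc ⟨t, ht, le_rfl⟩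
      have hleast : ∀ z, x < z → m ≤ z := by
        intro z hz
        rcases le_total z t with h | h
        · exact hmle z ⟨hz, h⟩
        · exact (hmle t ⟨ht, le_rfl⟩).trans h
      have hIio : Set.Iio m = insert x (Set.Iio x) := by
        ext z
        simp only [Set.mem_Iio, Set.mem_insert_iff]
        constructor
        · intro hzm
          rcases lt_trichotomy z x with h | h | h
          · exact Or.inr h
          · exact Or.inl h
          · exact absurd (hleast z h) (not_le.mpr hzm)
        · rintro (rfl | h)
          · exact hm.1
          · exact h.trans hm.1
      refine ⟨m, ?_⟩
      show (Set.Iio m).ncard = n + 1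
      rw [hIio, Set.ncard_insert_of_notMem (by simp) (hIioFin x)]
      exact congrArg (· + 1) hx
  exact ⟨StrictMono.orderIsoOfSurjective _ hsm hsurj⟩

end OmegaShift

end OmegaShiftDev2
section OmegaShiftDev3

variable {M : Type} [LinearOrder M]

namespace OmegaShift

theorem sim1_dual {x y : M} :
    sim1 (OrderDual.toDual x) (OrderDual.toDual y) ↔ sim1 x y := by
  have hset : Set.uIcc (OrderDual.toDual x) (OrderDual.toDual y) =
      OrderDual.ofDual ⁻¹' Set.uIcc x y := by
    ext z
    simp only [Set.mem_uIcc, Set.mem_preimage, OrderDual.toDual_le, OrderDual.le_toDual]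
    tauto
  rw [sim1, sim1, hset]
  constructor
  · intro h
    have := h.image (OrderDual.ofDual)
    rwa [Set.image_preimage_eq _ (OrderDual.ofDual.surjective)] at this
  · intro h
    exact h.preimage (Function.Injective.injOn (OrderDual.ofDual.injective))

/-- The Hausdorff derivative of the dual order is the dual of the derivative. -/
noncomputable def hderivDualIso (M : Type) [LinearOrder M] :
    HDeriv (Mᵒᵈ) ≃o (HDeriv M)ᵒᵈ where
  toFun := Quotient.map (fun x : Mᵒᵈ => (OrderDual.ofDual x : M))
    (fun _ _ h => sim1_dual.mp h)
  invFun := Quotient.map (fun x : M => (OrderDual.toDual x : Mᵒᵈ))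
    (fun _ _ h => sim1_dual.mpr h)
  left_inv := by
    intro q
    obtain ⟨x, rfl⟩ := Quotient.exists_rep q
    rfl
  right_inv := by
    intro q
    obtain ⟨x, rfl⟩ := Quotient.exists_rep q
    rfl
  map_rel_iff' := by
    intro a b
    obtain ⟨x, rfl⟩ := Quotient.exists_rep a
    obtain ⟨y, rfl⟩ := Quotient.exists_rep b
    show (hmk (OrderDual.ofDual y) ≤ hmk (OrderDual.ofDual x)) ↔ _
    rw [hd_le_iff]
    have hxy := sim1_dual (x := OrderDual.ofDual x) (y := OrderDual.ofDual y)
    exact or_congr Iff.rfl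
      ⟨fun h => hxy.mpr (sim1_symm h), fun h => sim1_symm (hxy.mp h)⟩

/-- Congruence of lexicographic products under order isomorphisms. -/
noncomputable def lexCongr {A A' B B' : Type} [LinearOrder A] [LinearOrder A']
    [LinearOrder B] [LinearOrder B'] (eA : A ≃o A') (eB : B ≃o B') :
    (A ×ₗ B) ≃o (A' ×ₗ B') where
  toFun x := toLex (eA (ofLex x).1, eB (ofLex x).2)
  invFun x := toLex (eA.symm (ofLex x).1, eB.symm (ofLex x).2)
  left_inv := by intro x; simp
  right_inv := by intro x; simp
  map_rel_iff' := by
    intro a b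
    rw [lex_le_def, lex_le_def]
    try simp only [ofLex_toLex]
    exact or_congr eA.lt_iff_lt
      (and_congr ⟨fun h => eA.injective h, fun h => congrArg eA h⟩ eB.le_iff_le)

/-- The dual of a lexicographic product is the lexicographic product of duals. -/
noncomputable def lexDualIso (A B : Type) [LinearOrder A] [LinearOrder B] :
    (A ×ₗ B)ᵒᵈ ≃o ((Aᵒᵈ) ×ₗ (Bᵒᵈ)) where
  toFun x := toLex (OrderDual.toDual (ofLex (OrderDual.ofDual x)).1,
    OrderDual.toDual (ofLex (OrderDual.ofDual x)).2)
  invFun x := OrderDual.toDual (toLex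
    (OrderDual.ofDual (ofLex x).1, OrderDual.ofDual (ofLex x).2))
  left_inv := fun _ => rfl
  right_inv := fun _ => rfl
  map_rel_iff' := by
    intro a b
    rw [lex_le_def]
    show _ ↔ (OrderDual.ofDual b ≤ OrderDual.ofDual a)
    rw [lex_le_def]
    try simp only [ofLex_toLex]
    exact or_congr Iff.rfl (and_congr ⟨fun h => h.symm, fun h => h.symm⟩ Iff.rfl)

end OmegaShift

end OmegaShiftDev3
/-- If `L` is a linear order of finite Hausdorff rank `r ≥ 1` (i.e. `L^(r)` is
finite and `L^(k)` is infinite for `k < r`) and `L ≅ ω ×ₗ L'` (resp. `ω* ×ₗ L'`),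
then `L^(r-1) ≅ ω` (resp. `ω*`). -/
theorem stmt_10 (L : Type) [LinearOrder L] (r : ℕ) (hr : 1 ≤ r)
    (hfin : Finite (IterDeriv L r)) (hinf : ∀ k < r, Infinite (IterDeriv L k)) :
    (∀ (L' : Type) [LinearOrder L'], Nonempty (L ≃o (ℕ ×ₗ L')) →
      Nonempty (IterDeriv L (r - 1) ≃o ℕ)) ∧
    (∀ (L' : Type) [LinearOrder L'], Nonempty (L ≃o (ℕᵒᵈ ×ₗ L')) →
      Nonempty (IterDeriv L (r - 1) ≃o ℕᵒᵈ)) := by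
  obtain ⟨s, rfl⟩ : ∃ s, r = s + 1 := ⟨r - 1, (Nat.succ_pred_eq_of_pos hr).symm⟩
  have hLinf : Infinite L := hinf 0 (Nat.succ_pos s)
  haveI := hLinf
  constructor
  · rintro L' _inst ⟨e⟩
    haveI : Nonempty L' := ⟨(ofLex (e (Classical.arbitrary L))).2⟩
    have chain : ∀ k : ℕ, k ≤ s → Nonempty (OmegaShift (IterDeriv L k)) := by
      intro k
      induction k with
      | zero =>
        intro _
        exact ⟨(OmegaShift.base L').ofIso e.symm⟩
      | succ k ih =>
        intro hk
        obtain ⟨S⟩ := ih (Nat.le_of_succ_le hk)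
        have hQ : Infinite (HDeriv (IterDeriv L k)) := hinf (k + 1) (Nat.lt_succ_of_le hk)
        exact ⟨S.step hQ⟩
    obtain ⟨S⟩ := chain s le_rfl
    have hinf' : Infinite (IterDeriv L s) := hinf s (Nat.lt_succ_self s)
    have hfin' : Finite (HDeriv (IterDeriv L s)) := hfin
    have h := S.toNat hinf' hfin'
    exact h
  · rintro L' _inst ⟨e⟩
    haveI : Nonempty L' := ⟨(ofLex (e (Classical.arbitrary L))).2⟩
    have E : ((ℕᵒᵈ ×ₗ L')ᵒᵈ) ≃o (ℕ ×ₗ (L'ᵒᵈ)) :=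
      (OmegaShift.lexDualIso (ℕᵒᵈ) L').trans
        (OmegaShift.lexCongr (OrderIso.dualDual ℕ).symm (OrderIso.refl (L'ᵒᵈ)))
    have eL : (ℕ ×ₗ (L'ᵒᵈ)) ≃o (Lᵒᵈ) := (e.dual.trans E).symm
    have chain : ∀ k : ℕ, k ≤ s → Nonempty (OmegaShift ((IterDeriv L k)ᵒᵈ)) := by
      intro k
      induction k with
      | zero =>
        intro _
        exact ⟨(OmegaShift.base (L'ᵒᵈ)).ofIso eL⟩
      | succ k ih =>
        intro hk
        obtain ⟨S⟩ := ih (Nat.le_of_succ_le hk)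
        have hQ1 : Infinite (HDeriv (IterDeriv L k)) := hinf (k + 1) (Nat.lt_succ_of_le hk)
        have hQ : Infinite (HDeriv ((IterDeriv L k)ᵒᵈ)) :=
          ((OmegaShift.hderivDualIso (IterDeriv L k)).toEquiv.infinite_iff).mpr
            (Infinite.of_injective OrderDual.toDual (fun _ _ h => h))
        have SQ := S.step hQ
        exact ⟨SQ.ofIso (OmegaShift.hderivDualIso (IterDeriv L k))⟩
    obtain ⟨S⟩ := chain s le_rfl
    have hinf' : Infinite ((IterDeriv L s)ᵒᵈ) := by
      haveI : Infinite (IterDeriv L s) := hinf s (Nat.lt_succ_self s)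
      exact Infinite.of_injective OrderDual.toDual (fun _ _ h => h)
    have hfin' : Finite (HDeriv ((IterDeriv L s)ᵒᵈ)) := by
      haveI : Finite (HDeriv (IterDeriv L s)) := hfin
      haveI : Finite ((HDeriv (IterDeriv L s))ᵒᵈ) :=
        Finite.of_injective OrderDual.ofDual (fun _ _ h => h)
      exact Finite.of_equiv _ (OmegaShift.hderivDualIso (IterDeriv L s)).toEquiv.symm
    obtain ⟨h⟩ := S.toNat hinf' hfin'
    exact ⟨(OrderIso.dualDual (IterDeriv L s)).trans h.dual⟩
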